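/- Let G=(V,E) be a directed unweighted graph with total ranking r. For any s,t ∈ V with dist_G(s,t) finite, let v_m be a vertex of maximum rank among all vertices lying on some shortest path from s to t (v_m may be s or t). Then there is no vertex w with r(w) > r(v_m) and dist_G(s,w) + dist_G(w,v_m) = dist_G(s,v_m); consequently the entry (s→v_m, dist_G(s,v_m)) cannot be pruned by the rule that removes (u→v,d) when some w with r(w)>max(r(u),r(v)) satisfies dist_G(u,w)+dist_G(w,v) ≤ d. -/

import Mathlib

def IsPath {V : Type*} (E : V → V → Prop) (p : List V) (u v : V) : Prop :=
  List.Chain' E p ∧ p.head? = some u ∧ p.getLast? = some v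

def IsShortestPath {V : Type*} (E : V → V → Prop) (p : List V) (u v : V) : Prop :=
  IsPath E p u v ∧ ∀ q : List V, IsPath E q u v → p.length ≤ q.length

def Trough {V : Type*} (r : V → ℕ) (p : List V) (u v : V) : Prop :=
  ∀ x ∈ (p.drop 1).dropLast, r x < max (r u) (r v)

noncomputable def GDist {V : Type*} (E : V → V → Prop) (u v : V) : ℕ∞ :=
  sInf { n : ℕ∞ | ∃ p : List V, IsPath E p u v ∧ n = ((p.length - 1 : ℕ) : ℕ∞) }

lemma GDist_le {V : Type*} (E : V → V → Prop) {p : List V} {u v : V} (h : IsPath E p u v) :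
    GDist E u v ≤ ((p.length - 1 : ℕ) : ℕ∞) :=
  sInf_le ⟨p, h, rfl⟩

lemma GDist_exists {V : Type*} (E : V → V → Prop) {u v : V} (h : GDist E u v ≠ ⊤) :
    ∃ p : List V, IsPath E p u v ∧ GDist E u v = ((p.length - 1 : ℕ) : ℕ∞) := by
  have hne : { n : ℕ∞ | ∃ p : List V, IsPath E p u v ∧ n = ((p.length - 1 : ℕ) : ℕ∞) }.Nonempty := by
    by_contra hc
    rw [Set.not_nonempty_iff_eq_empty] at hc
    apply h
    unfold GDist
    rw [hc, sInf_empty]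
  exact csInf_mem hne

lemma path_concat {V : Type*} (E : V → V → Prop) {p q : List V} {u v w : V}
    (hp : IsPath E p u v) (hq : IsPath E q v w) :
    IsPath E (p ++ q.tail) u w ∧ (p ++ q.tail).length - 1 = (p.length - 1) + (q.length - 1) := by
  obtain ⟨hpc, hph, hpl⟩ := hp
  obtain ⟨hqc, hqh, hql⟩ := hq
  have hpne : p ≠ [] := by rintro rfl; simp at hph
  have hqne : q ≠ [] := by rintro rfl; simp at hqh
  obtain ⟨b, q', rfl⟩ : ∃ b q', q = b :: q' := by
    cases q with | nil => exact absurd rfl hqne | cons b q' => exact ⟨b, q', rfl⟩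
  have hb : b = v := by simpa using hqh
  subst hb
  have hchain : List.Chain' E (p ++ q') := by
    show List.IsChain E (p ++ q')
    rw [List.isChain_append]
    refine ⟨hpc, (List.isChain_cons.mp hqc).2, ?_⟩
    intro x hx y hy
    rw [hpl] at hx
    simp only [Option.mem_def, Option.some.injEq] at hx
    subst hx
    exact (List.isChain_cons.mp hqc).1 y hy
  constructor
  · refine ⟨by simpa using hchain, ?_, ?_⟩
    · rw [List.tail_cons, List.head?_append_of_ne_nil _ hpne]; exact hph
    · cases q' with
      | nil =>
        have : b = w := by simpa using hql
        subst this; simpa using hpl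
      | cons c q'' =>
        rw [List.tail_cons, List.getLast?_append_of_ne_nil _ (by simp)]
        simpa using hql
  · have hplen : 1 ≤ p.length := by
      cases p with | nil => exact absurd rfl hpne | cons _ _ => simp
    simp [List.length_append]
    omega

lemma GDist_triangle {V : Type*} (E : V → V → Prop) (u v w : V) :
    GDist E u w ≤ GDist E u v + GDist E v w := by
  by_cases h1 : GDist E u v = ⊤
  · simp [h1]
  by_cases h2 : GDist E v w = ⊤
  · simp [h2]
  obtain ⟨p, hp, hpe⟩ := GDist_exists E h1
  obtain ⟨q, hq, hqe⟩ := GDist_exists E h2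
  obtain ⟨hc, hlen⟩ := path_concat E hp hq
  calc GDist E u w ≤ (((p ++ q.tail).length - 1 : ℕ) : ℕ∞) := GDist_le E hc
    _ = ((p.length - 1 : ℕ) : ℕ∞) + ((q.length - 1 : ℕ) : ℕ∞) := by rw [hlen]; push_cast; ring
    _ = GDist E u v + GDist E v w := by rw [hpe, hqe]

theorem stmt5 {V : Type*} (E : V → V → Prop) (r : V → ℕ) (hr : Function.Injective r)
    (s t vm : V)
    (hst : GDist E s t ≠ ⊤)
    (hon : GDist E s vm + GDist E vm t = GDist E s t)
    (hmax : ∀ w : V, GDist E s w + GDist E w t = GDist E s t → r w ≤ r vm) :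
    ¬ ∃ w : V, r vm < r w ∧ GDist E s w + GDist E w vm = GDist E s vm := by
  rintro ⟨w, hrw, hw⟩
  have hle : GDist E s w + GDist E w t ≤ GDist E s t := by
    calc GDist E s w + GDist E w t
        ≤ GDist E s w + (GDist E w vm + GDist E vm t) := by
          gcongr; exact GDist_triangle E w vm t
      _ = (GDist E s w + GDist E w vm) + GDist E vm t := by ring
      _ = GDist E s vm + GDist E vm t := by rw [hw]
      _ = GDist E s t := hon
  have hge : GDist E s t ≤ GDist E s w + GDist E w t := GDist_triangle E s w t
  have := hmax w (le_antisymm hle hge)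
  omega
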